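/- Let p ≥ 5 be a prime. Then ∑_{k=1}^{p-1} (3k)!/(k!^3) * 27^{-k} * (1/k) ≡ 3*q_p(3) (mod p), where 27^{-k} denotes the inverse of 27^k modulo p and q_p(3) = (3^{p-1}-1)/p. -/

import Mathlib

open Finset

lemma aux_cast_ne_zero {p : ℕ} [Fact p.Prime] {k : ℕ} (h1 : k ≠ 0) (h2 : k < p) :
    (k : ZMod p) ≠ 0 := by
  rw [Ne, ZMod.natCast_eq_zero_iff]
  intro h
  exact absurd (Nat.le_of_dvd (Nat.pos_of_ne_zero h1) h) (by omega)

lemma aux_A_fact (k : ℕ) :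
    (3*k).choose k * (2*k).choose k * (k.factorial)^3 = (3*k).factorial := by
  have h1 := Nat.choose_mul_factorial_mul_factorial (show k ≤ 3*k by omega)
  have h2 := Nat.choose_mul_factorial_mul_factorial (show k ≤ 2*k by omega)
  have e1 : 3*k - k = 2*k := by omega
  have e2 : 2*k - k = k := by omega
  rw [e1] at h1; rw [e2] at h2
  calc (3*k).choose k * (2*k).choose k * (k.factorial)^3
      = (3*k).choose k * k.factorial * ((2*k).choose k * k.factorial * k.factorial) := by ring
    _ = (3*k).choose k * k.factorial * (2*k).factorial := by rw [h2]
    _ = (3*k).factorial := h1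

lemma aux_factdiv (k : ℕ) :
    (3*k).factorial / k.factorial^3 = (3*k).choose k * (2*k).choose k :=
  Nat.div_eq_of_eq_mul_left (by positivity) (aux_A_fact k).symm

lemma aux_A_rec (k : ℕ) :
    (3*(k+1)).choose (k+1) * (2*(k+1)).choose (k+1) * (k+1)^3
      = (3*k).choose k * (2*k).choose k * ((3*k+1)*(3*k+2)*(3*k+3)) := by
  apply Nat.eq_of_mul_eq_mul_right (show 0 < k.factorial^3 by positivity)
  have h1 := aux_A_fact (k+1)
  have h2 := aux_A_fact k
  have e : ((k+1).factorial)^3 = (k+1)^3 * (k.factorial)^3 := by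
    rw [Nat.factorial_succ]; ring
  have e2 : (3*(k+1)).factorial = (3*k+1)*(3*k+2)*(3*k+3) * (3*k).factorial := by
    have : 3*(k+1) = (3*k+2)+1 := by omega
    rw [this, Nat.factorial_succ]
    have : 3*k+2 = (3*k+1)+1 := by omega
    rw [this, Nat.factorial_succ, Nat.factorial_succ]
    ring_nf
  calc (3*(k+1)).choose (k+1) * (2*(k+1)).choose (k+1) * (k+1)^3 * k.factorial^3
      = (3*(k+1)).choose (k+1) * (2*(k+1)).choose (k+1) * ((k+1).factorial)^3 := by rw [e]; ring
    _ = (3*(k+1)).factorial := h1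
    _ = (3*k+1)*(3*k+2)*(3*k+3) * (3*k).factorial := e2
    _ = (3*k).choose k * (2*k).choose k * ((3*k+1)*(3*k+2)*(3*k+3)) * k.factorial^3 := by
        rw [← h2]; ring

lemma aux_lemma1 {p : ℕ} [Fact p.Prime] {m : ℕ} (hm : 3*m+1 = p ∨ 3*m+1 = 2*p) :
    ∀ k, k ≤ p - 1 →
      (((3*k).choose k * (2*k).choose k : ℕ) : ZMod p)
        = (-1)^k * (m.choose k : ZMod p) * ((m+k).choose k : ZMod p) * (27:ZMod p)^k := by
  have hp := (Fact.out : p.Prime)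
  have hp2 := hp.two_le
  intro k hk
  induction k with
  | zero => simp
  | succ k ih =>
    have hkp : k + 1 < p := by omega
    have ihh := ih (by omega)
    have kne : ((k:ZMod p)+1) ≠ 0 := by
      have : (((k+1:ℕ)) : ZMod p) ≠ 0 := aux_cast_ne_zero (by omega) hkp
      push_cast at this; exact this
    have hm0 : (3:ZMod p)*(m:ZMod p) + 1 = 0 := by
      have : ((3*m+1 : ℕ) : ZMod p) = 0 := by
        rcases hm with h | h <;> rw [h] <;> push_cast <;>
          simp [ZMod.natCast_self]
      push_cast at this; exact this
    have hrecK : (((3*(k+1)).choose (k+1) * (2*(k+1)).choose (k+1) : ℕ) : ZMod p) * ((k:ZMod p)+1)^3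
        = (((3*k).choose k * (2*k).choose k : ℕ) : ZMod p)
          * ((3*(k:ZMod p)+1)*(3*(k:ZMod p)+2)*(3*(k:ZMod p)+3)) := by
      have := congrArg (Nat.cast : ℕ → ZMod p) (aux_A_rec k)
      push_cast at this
      push_cast
      linear_combination this
    -- binomial recurrences
    have r1 : (m.choose (k+1) : ZMod p) * ((k:ZMod p)+1)
        = (m.choose k : ZMod p) * ((m:ZMod p) - (k:ZMod p)) := by
      rcases le_or_gt k m with h | h
      · have := congrArg (Nat.cast : ℕ → ZMod p) (Nat.choose_succ_right_eq m k)
        push_cast [Nat.cast_sub h] at this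
        linear_combination this
      · rw [Nat.choose_eq_zero_of_lt (by omega), Nat.choose_eq_zero_of_lt h]
        simp
    have r2 : ((m+(k+1)).choose (k+1) : ZMod p) * ((k:ZMod p)+1)
        = ((m+k).choose k : ZMod p) * ((m:ZMod p) + (k:ZMod p) + 1) := by
      have := congrArg (Nat.cast : ℕ → ZMod p) (Nat.add_one_mul_choose_eq (m+k) k)
      push_cast [Nat.succ_eq_add_one] at this
      have e : m + k + 1 = m + (k+1) := by omega
      rw [← e]
      linear_combination -this
    apply mul_right_cancel₀ (pow_ne_zero 3 kne)
    push_cast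
    calc (((3*(k+1)).choose (k+1) : ZMod p) * ((2*(k+1)).choose (k+1) : ZMod p)) * ((k:ZMod p)+1)^3
        = (((3*k).choose k * (2*k).choose k : ℕ) : ZMod p)
          * ((3*(k:ZMod p)+1)*(3*(k:ZMod p)+2)*(3*(k:ZMod p)+3)) := by
          push_cast at hrecK ⊢; linear_combination hrecK
      _ = ((-1)^k * (m.choose k : ZMod p) * ((m+k).choose k : ZMod p) * (27:ZMod p)^k)
          * ((3*(k:ZMod p)+1)*(3*(k:ZMod p)+2)*(3*(k:ZMod p)+3)) := by
          push_cast at ihh; rw [← ihh]; push_cast; ring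
      _ = ((-1)^k * (m.choose k : ZMod p) * ((m+k).choose k : ZMod p) * (27:ZMod p)^k)
          * (-27 * ((m:ZMod p) - k) * ((m:ZMod p)+k+1) * ((k:ZMod p)+1)) := by
          have key : (3*(k:ZMod p)+1)*(3*(k:ZMod p)+2)*(3*(k:ZMod p)+3)
              = -27 * ((m:ZMod p) - k) * ((m:ZMod p)+k+1) * ((k:ZMod p)+1) := by
            linear_combination (3*((k:ZMod p)+1)*(3*(m:ZMod p)+2)) * hm0
          rw [key]
      _ = (-1)^(k+1) * (m.choose (k+1) : ZMod p) * ((m+(k+1)).choose (k+1) : ZMod p)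
            * (27:ZMod p)^(k+1) * ((k:ZMod p)+1)^3 := by
          linear_combination (27*(-1:ZMod p)^k*(27:ZMod p)^k*((k:ZMod p)+1)^2*(((m+(k+1)).choose (k+1):ℕ):ZMod p)) * r1
            + (27*(-1:ZMod p)^k*(27:ZMod p)^k*((m.choose k:ℕ):ZMod p)*((m:ZMod p)-(k:ZMod p))*((k:ZMod p)+1)) * r2

-- V identity over ℤ
lemma aux_V (j : ℕ) (hj : 1 ≤ j) (m : ℕ) (hm : j ≤ m) :
    ∑ k ∈ Icc j m, (-1:ℤ)^k * (m.choose k) * ((k-1).choose (j-1)) = (-1)^j := by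
  induction m, hm using Nat.le_induction with
  | base =>
    rw [Finset.Icc_self, Finset.sum_singleton, Nat.choose_self, Nat.choose_self]
    simp
  | succ m hm ih =>
    have split : ∀ k ∈ Icc j (m+1), (-1:ℤ)^k * ((m+1).choose k) * ((k-1).choose (j-1))
        = (-1:ℤ)^k * (m.choose k) * ((k-1).choose (j-1))
          + (-1:ℤ)^k * (m.choose (k-1)) * ((k-1).choose (j-1)) := by
      intro k hk
      simp only [mem_Icc] at hk
      have hk1 : k = (k-1) + 1 := by omega
      rw [hk1, Nat.choose_succ_succ' m (k-1)]
      push_cast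
      ring
    rw [Finset.sum_congr rfl split, Finset.sum_add_distrib]
    have e1 : ∑ k ∈ Icc j (m+1), (-1:ℤ)^k * (m.choose k) * ((k-1).choose (j-1)) = (-1)^j := by
      rw [Finset.sum_Icc_succ_top (by omega : j ≤ m+1), Nat.choose_eq_zero_of_lt (by omega)]
      rw [← ih]
      push_cast
      ring
    have e2 : ∑ k ∈ Icc j (m+1), (-1:ℤ)^k * (m.choose (k-1)) * ((k-1).choose (j-1)) = 0 := by
      have hIco : Icc j (m+1) = Ico j (m+2) := by rw [← Finset.Ico_add_one_right_eq_Icc]; rfl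
      rw [hIco, Finset.sum_Ico_eq_sum_range]
      have e3 : ∀ i ∈ range (m+2-j), (-1:ℤ)^(j+i) * (m.choose (j+i-1)) * ((j+i-1).choose (j-1))
          = ((-1:ℤ)^j * (m.choose (j-1))) * ((-1:ℤ)^i * ((m-(j-1)).choose i)) := by
        intro i hi
        simp only [mem_range] at hi
        have h1 : j - 1 ≤ j + i - 1 := by omega
        have h2 : j + i - 1 ≤ m := by omega
        have htri := Nat.choose_mul (n := m) h1
        have e4 : j + i - 1 - (j-1) = i := by omega
        rw [e4] at htri
        have htriZ : ((m.choose (j+i-1)) : ℤ) * (((j+i-1).choose (j-1)) : ℤ)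
            = ((m.choose (j-1)) : ℤ) * (((m-(j-1)).choose i) : ℤ) := by exact_mod_cast htri
        linear_combination ((-1:ℤ)^(j+i)) * htriZ
      rw [Finset.sum_congr rfl e3, ← Finset.mul_sum]
      have e6 : m + 2 - j = (m - (j-1)) + 1 := by omega
      rw [e6, Int.alternating_sum_range_choose, if_neg (by omega)]
      ring
    rw [e1, e2, add_zero]

-- IIIa in ZMod p
lemma aux_IIIa {p : ℕ} [Fact p.Prime] : ∀ M, M < p →
    ∑ k ∈ Icc 1 M, (-1)^k * (M.choose k : ZMod p) * (k:ZMod p)⁻¹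
      = - ∑ k ∈ Icc 1 M, ((k:ZMod p))⁻¹ := by
  intro M
  induction M with
  | zero => simp
  | succ M ih =>
    intro hM
    have ihh := ih (by omega)
    have hM1 : ((M:ZMod p)+1) ≠ 0 := by
      have : (((M+1:ℕ)) : ZMod p) ≠ 0 := aux_cast_ne_zero (by omega) hM
      push_cast at this; exact this
    have split : ∀ k ∈ Icc 1 (M+1), (-1)^k * ((M+1).choose k : ZMod p) * (k:ZMod p)⁻¹
        = (-1)^k * (M.choose k : ZMod p) * (k:ZMod p)⁻¹
          + (-1)^k * ((M+1).choose k : ZMod p) * ((M:ZMod p)+1)⁻¹ := by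
      intro k hk
      simp only [mem_Icc] at hk
      have hkk : (k:ZMod p) ≠ 0 := aux_cast_ne_zero (by omega) (by omega)
      have hk1 : k = (k-1) + 1 := by omega
      have hrecK : ((M:ZMod p)+1) * (M.choose (k-1) : ZMod p)
          = ((M+1).choose k : ZMod p) * (k : ZMod p) := by
        have h := Nat.add_one_mul_choose_eq M (k-1)
        rw [← hk1] at h
        exact_mod_cast congrArg (Nat.cast : ℕ → ZMod p) h
      have hsplit : ((M+1).choose k : ZMod p)
          = (M.choose k : ZMod p) + (M.choose (k-1) : ZMod p) := by
        conv_lhs => rw [hk1]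
        rw [Nat.choose_succ_succ' M (k-1), ← hk1]
        push_cast; ring
      have hinv : (k:ZMod p)⁻¹ * (k:ZMod p) = 1 := inv_mul_cancel₀ hkk
      have hinv2 : ((M:ZMod p)+1)⁻¹ * ((M:ZMod p)+1) = 1 := inv_mul_cancel₀ hM1
      apply mul_right_cancel₀ (mul_ne_zero hkk hM1)
      linear_combination ((-1:ZMod p)^k * (k:ZMod p) * ((M:ZMod p)+1) * (k:ZMod p)⁻¹) * hsplit
        + ((-1:ZMod p)^k * ((M:ZMod p)+1) * (M.choose (k-1):ZMod p)) * hinv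
        - ((-1:ZMod p)^k * ((M+1).choose k:ZMod p) * (k:ZMod p)) * hinv2
        + (-1:ZMod p)^k * hrecK
    rw [Finset.sum_congr rfl split, Finset.sum_add_distrib]
    have e1 : ∑ k ∈ Icc 1 (M+1), (-1)^k * (M.choose k : ZMod p) * (k:ZMod p)⁻¹
        = - ∑ k ∈ Icc 1 M, ((k:ZMod p))⁻¹ := by
      rw [Finset.sum_Icc_succ_top (by omega : 1 ≤ M+1), Nat.choose_eq_zero_of_lt (by omega)]
      rw [← ihh]
      push_cast
      ring
    have e2 : ∑ k ∈ Icc 1 (M+1), (-1)^k * ((M+1).choose k : ZMod p) * ((M:ZMod p)+1)⁻¹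
        = -((M:ZMod p)+1)⁻¹ := by
      rw [← Finset.sum_mul]
      have hS : ∑ k ∈ Icc 1 (M+1), (-1)^k * ((M+1).choose k : ZMod p) = -1 := by
        have hins : range (M+2) = insert 0 (Icc 1 (M+1)) := by
          ext x; simp [Finset.mem_range, Finset.mem_Icc]; omega
        have halt : ∑ i ∈ range (M+2), (-1:ZMod p)^i * ((M+1).choose i : ZMod p) = 0 := by
          have h := congrArg (Int.cast : ℤ → ZMod p) (Int.alternating_sum_range_choose (n := M+1))
          rw [if_neg (by omega)] at h
          push_cast at h
          convert h using 2
        rw [hins, Finset.sum_insert (by simp)] at halt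
        simp only [pow_zero, Nat.choose_zero_right, Nat.cast_one, one_mul] at halt
        linear_combination halt
      rw [hS]; ring
    rw [e1, e2]
    rw [Finset.sum_Icc_succ_top (by omega : 1 ≤ M+1)]
    push_cast
    ring

lemma aux_prod_expand {R : Type*} [CommRing R] (c : R) (hc : c*c = 0) (s : Finset ℕ) (f g : ℕ → R) :
    ∏ k ∈ s, (f k + c * g k)
      = ∏ k ∈ s, f k + c * ∑ k ∈ s, g k * ∏ j ∈ s.erase k, f j := by
  induction s using Finset.induction with
  | empty => simp
  | @insert a s ha ih =>
    rw [Finset.prod_insert ha, Finset.prod_insert ha, ih, Finset.sum_insert ha,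
      Finset.erase_insert ha]
    have congr1 : ∀ k ∈ s, g k * ∏ j ∈ (insert a s).erase k, f j
        = g k * (f a * ∏ j ∈ s.erase k, f j) := by
      intro k hk
      rw [Finset.erase_insert_of_ne (by rintro rfl; exact ha hk),
        Finset.prod_insert (fun h => ha (Finset.mem_of_mem_erase h))]
    rw [Finset.sum_congr rfl congr1]
    have expand : ∑ k ∈ s, g k * (f a * ∏ j ∈ s.erase k, f j)
        = f a * ∑ k ∈ s, g k * ∏ j ∈ s.erase k, f j := by
      rw [Finset.mul_sum]; exact Finset.sum_congr rfl (fun k _ => by ring)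
    rw [expand]
    linear_combination (g a * ∑ k ∈ s, g k * ∏ j ∈ s.erase k, f j) * hc

lemma aux_perm_prod {p : ℕ} [hp : Fact p.Prime] (hp5 : 5 ≤ p) :
    ∏ k ∈ Icc 1 (p-1), (3*k % p) = ∏ k ∈ Icc 1 (p-1), k := by
  have hpp := hp.out
  have hp3 : ¬ (p ∣ 3) := fun h => absurd (Nat.le_of_dvd (by norm_num) h) (by omega)
  have hmaps : ∀ k ∈ Icc 1 (p-1), 3*k % p ∈ Icc 1 (p-1) := by
    intro k hk
    simp only [mem_Icc] at hk ⊢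
    have h1 : 3*k % p < p := Nat.mod_lt _ (by omega)
    have h2 : 3*k % p ≠ 0 := by
      rw [Ne, ← Nat.dvd_iff_mod_eq_zero]
      intro h
      have hco : Nat.Coprime p 3 := (Nat.coprime_primes hpp (by norm_num)).mpr (by omega)
      have hdk : p ∣ k := hco.dvd_of_dvd_mul_left h
      exact absurd (Nat.le_of_dvd (by omega) hdk) (by omega)
    omega
  have hinj : ∀ k ∈ Icc 1 (p-1), ∀ l ∈ Icc 1 (p-1), 3*k % p = 3*l % p → k = l := by
    intro k hk l hl h
    simp only [mem_Icc] at hk hl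
    have hc : ((3*k : ℕ) : ZMod p) = ((3*l : ℕ) : ZMod p) := by
      have := congrArg (Nat.cast : ℕ → ZMod p) h
      rwa [ZMod.natCast_mod, ZMod.natCast_mod] at this
    have h3 : (3 : ZMod p) ≠ 0 := by
      rw [show (3 : ZMod p) = ((3:ℕ) : ZMod p) by push_cast; rfl,
        Ne, ZMod.natCast_eq_zero_iff]
      exact hp3
    push_cast at hc
    have hkl : (k : ZMod p) = (l : ZMod p) := mul_left_cancel₀ h3 hc
    have := congrArg ZMod.val hkl
    rwa [ZMod.val_cast_of_lt (by omega), ZMod.val_cast_of_lt (by omega)] at this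
  -- image equals the set
  have himg : (Icc 1 (p-1)).image (fun k => 3*k % p) = Icc 1 (p-1) := by
    apply Finset.eq_of_subset_of_card_le
    · intro x hx
      rcases Finset.mem_image.mp hx with ⟨k, hk, rfl⟩
      exact hmaps k hk
    · rw [Finset.card_image_of_injOn (fun k hk l hl h => hinj k hk l hl h)]
  calc ∏ k ∈ Icc 1 (p-1), (3*k % p)
      = ∏ x ∈ (Icc 1 (p-1)).image (fun k => 3*k % p), x := by
        rw [Finset.prod_image (fun k hk l hl h => hinj k hk l hl h)]
    _ = ∏ k ∈ Icc 1 (p-1), k := by rw [himg]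

lemma aux_reflect {p : ℕ} [hp : Fact p.Prime] (t : ℕ) (ht : t ≤ p-1) :
    ∑ k ∈ Icc (p-t) (p-1), (k:ZMod p)⁻¹ = - ∑ k ∈ Icc 1 t, (k:ZMod p)⁻¹ := by
  have hp2 := hp.out.two_le
  have step1 : ∑ k ∈ Icc (p-t) (p-1), (k:ZMod p)⁻¹ = ∑ k ∈ Icc 1 t, ((p-k : ℕ) : ZMod p)⁻¹ := by
    apply Finset.sum_nbij' (i := fun k => p - k) (j := fun k => p - k)
    · intro a ha; simp only [mem_Icc] at ha ⊢; omega
    · intro a ha; simp only [mem_Icc] at ha ⊢; omega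
    · intro a ha; simp only [mem_Icc] at ha; omega
    · intro a ha; simp only [mem_Icc] at ha; omega
    · intro a ha
      simp only [mem_Icc] at ha
      congr 2
      omega
  rw [step1, ← Finset.sum_neg_distrib]
  apply Finset.sum_congr rfl
  intro k hk
  simp only [mem_Icc] at hk
  have e : ((p-k : ℕ) : ZMod p) = - (k : ZMod p) := by
    rw [Nat.cast_sub (by omega), ZMod.natCast_self]
    ring
  rw [e, inv_neg]

lemma aux_prod_Icc_fact (n : ℕ) : ∏ x ∈ Icc 1 n, x = n.factorial := by
  induction n with
  | zero => simp
  | succ n ih => rw [Finset.prod_Icc_succ_top (by omega), ih, Nat.factorial_succ, mul_comm]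

lemma aux_3q {p : ℕ} [hp : Fact p.Prime] (hp5 : 5 ≤ p) :
    ((3 * ((3^(p-1) - 1) / p) : ℕ) : ZMod p)
      = ∑ k ∈ Icc 1 (p-1), ((3*k/p : ℕ) : ZMod p) * (k:ZMod p)⁻¹ := by
  have hpp := hp.out
  have hp0 : p ≠ 0 := by omega
  have h3ne : (3 : ZMod p) ≠ 0 := by
    have : ((3:ℕ) : ZMod p) ≠ 0 := aux_cast_ne_zero (by norm_num) (by omega)
    push_cast at this; exact this
  set q := (3^(p-1) - 1) / p with hqdef
  have hflt : ((3:ℕ) : ZMod p)^(p-1) = 1 :=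
    ZMod.pow_card_sub_one_eq_one (by push_cast; exact h3ne)
  have hdvd : p ∣ 3^(p-1) - 1 := by
    have h1 : ((3^(p-1) : ℕ) : ZMod p) = ((1:ℕ) : ZMod p) := by
      push_cast; push_cast at hflt; exact hflt
    have h2 : 3^(p-1) ≡ 1 [MOD p] := (ZMod.natCast_eq_natCast_iff _ _ _).mp h1
    exact (Nat.modEq_iff_dvd' (Nat.one_le_pow _ _ (by norm_num))).mp h2.symm
  have hq : 3^(p-1) = 1 + q * p := by
    have h : q * p = 3^(p-1) - 1 := Nat.div_mul_cancel hdvd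
    have h32 : 1 ≤ 3^(p-1) := Nat.one_le_pow _ _ (by norm_num)
    rw [h]
    omega
  set F := (p-1).factorial with hF
  haveI : NeZero (p^2) := ⟨by positivity⟩
  have hc : ((p : ZMod (p^2)) * (p : ZMod (p^2))) = 0 := by
    have h : (((p*p) : ℕ) : ZMod (p^2)) = 0 := by
      rw [ZMod.natCast_eq_zero_iff, pow_two]
    push_cast at h; exact h
  have hexpand := aux_prod_expand (R := ZMod (p^2)) (p : ZMod (p^2)) hc (Icc 1 (p-1))
      (fun k => ((3*k % p : ℕ) : ZMod (p^2))) (fun k => ((3*k / p : ℕ) : ZMod (p^2)))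
  have hterm : ∀ k ∈ Icc 1 (p-1),
      (3 : ZMod (p^2)) * (k : ZMod (p^2))
        = ((3*k % p : ℕ) : ZMod (p^2)) + (p : ZMod (p^2)) * ((3*k / p : ℕ) : ZMod (p^2)) := by
    intro k _
    have e : 3*k % p + p * (3*k/p) = 3*k := by
      have := Nat.div_add_mod (3*k) p; omega
    calc (3 : ZMod (p^2)) * (k : ZMod (p^2)) = ((3*k : ℕ) : ZMod (p^2)) := by push_cast; ring
      _ = ((3*k % p + p * (3*k/p) : ℕ) : ZMod (p^2)) := by rw [e]
      _ = ((3*k % p : ℕ) : ZMod (p^2)) + (p : ZMod (p^2)) * ((3*k / p : ℕ) : ZMod (p^2)) := by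
          push_cast; ring
  set Sn := (∑ k ∈ Icc 1 (p-1), (3*k/p) * ∏ j ∈ (Icc 1 (p-1)).erase k, (3*j % p) : ℕ) with hSn
  have hprod_eq : ((∏ k ∈ Icc 1 (p-1), (3*k) : ℕ) : ZMod (p^2))
      = ((∏ k ∈ Icc 1 (p-1), (3*k % p) : ℕ) : ZMod (p^2))
        + (p : ZMod (p^2)) * ((Sn : ℕ) : ZMod (p^2)) := by
    rw [hSn]
    push_cast
    rw [Finset.prod_congr rfl hterm, hexpand]
  have hL : (∏ k ∈ Icc 1 (p-1), (3*k) : ℕ) = F + p * (q * F) := by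
    have h : ∏ k ∈ Icc 1 (p-1), (3*k) = 3^(p-1) * F := by
      rw [Finset.prod_mul_distrib, Finset.prod_const, Nat.card_Icc, hF, ← aux_prod_Icc_fact]
      simp
    rw [h, hq]; ring
  have hR : (∏ k ∈ Icc 1 (p-1), (3*k % p) : ℕ) = F := by
    rw [aux_perm_prod hp5, aux_prod_Icc_fact]
  have h6 : ((F + p*(q*F) : ℕ) : ZMod (p^2)) = ((F + p*Sn : ℕ) : ZMod (p^2)) := by
    have h5 := hprod_eq
    rw [hL, hR] at h5
    push_cast at h5 ⊢
    linear_combination h5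
  have h7 : F + p*(q*F) ≡ F + p*Sn [MOD p^2] := (ZMod.natCast_eq_natCast_iff _ _ _).mp h6
  have hdd : ((p^2 : ℕ) : ℤ) ∣ ((F + p*Sn : ℕ) : ℤ) - ((F + p*(q*F) : ℕ) : ℤ) := h7.dvd
  obtain ⟨c, hc2⟩ := hdd
  have hpZ : (p:ℤ) ≠ 0 := by exact_mod_cast hp0
  have h9 : (Sn:ℤ) - (q:ℤ)*(F:ℤ) = (p:ℤ) * c := by
    apply mul_left_cancel₀ hpZ
    push_cast at hc2
    linear_combination hc2
  have hKey : ((q : ℕ) : ZMod p) * ((F : ℕ) : ZMod p) = ((Sn : ℕ) : ZMod p) := by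
    have h10 := congrArg (Int.cast : ℤ → ZMod p) h9
    push_cast at h10
    rw [ZMod.natCast_self] at h10
    linear_combination -h10
  have hWilson : ((F:ℕ) : ZMod p) = -1 := ZMod.wilsons_lemma p
  have hFne : ((F:ℕ) : ZMod p) ≠ 0 := by rw [hWilson]; exact neg_ne_zero.mpr one_ne_zero
  have hSnK : ((Sn : ℕ) : ZMod p)
      = ((F:ℕ):ZMod p) * ∑ k ∈ Icc 1 (p-1), ((3*k/p : ℕ) : ZMod p) * ((3:ZMod p)*(k:ZMod p))⁻¹ := by
    rw [hSn]
    push_cast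
    rw [Finset.mul_sum]
    apply Finset.sum_congr rfl
    intro k hk
    have hkIcc := Finset.mem_Icc.mp hk
    have hkne : (k : ZMod p) ≠ 0 := aux_cast_ne_zero (by omega) (by omega)
    have hne : ((3:ZMod p)*(k:ZMod p)) ≠ 0 := mul_ne_zero h3ne hkne
    have hpe : (∏ j ∈ (Icc 1 (p-1)).erase k, ((3*j % p : ℕ) : ZMod p)) * ((3*k % p:ℕ) : ZMod p)
        = ((F:ℕ):ZMod p) := by
      rw [Finset.prod_erase_mul _ _ hk, ← Nat.cast_prod, hR]
    have hcast : ((3*k % p:ℕ) : ZMod p) = (3:ZMod p)*(k:ZMod p) := by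
      rw [ZMod.natCast_mod]; push_cast; ring
    rw [hcast] at hpe
    have hprodval : (∏ j ∈ (Icc 1 (p-1)).erase k, ((3*j % p : ℕ) : ZMod p))
        = ((F:ℕ):ZMod p) * ((3:ZMod p)*(k:ZMod p))⁻¹ :=
      (eq_mul_inv_iff_mul_eq₀ hne).mpr hpe
    rw [hprodval]
    ring
  rw [hSnK] at hKey
  have hq2 : ((q:ℕ) : ZMod p)
      = ∑ k ∈ Icc 1 (p-1), ((3*k/p : ℕ) : ZMod p) * ((3:ZMod p)*(k:ZMod p))⁻¹ := by
    apply mul_left_cancel₀ hFne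
    rw [← hKey]; ring
  push_cast
  push_cast at hq2
  rw [hq2, Finset.mul_sum]
  apply Finset.sum_congr rfl
  intro k hk
  have hkIcc := Finset.mem_Icc.mp hk
  have hkne : (k : ZMod p) ≠ 0 := aux_cast_ne_zero (by omega) (by omega)
  rw [mul_inv]
  have h33 : (3:ZMod p) * (3:ZMod p)⁻¹ = 1 := mul_inv_cancel₀ h3ne
  linear_combination (((3*k/p : ℕ) : ZMod p) * (k:ZMod p)⁻¹) * h33

lemma aux_Hm {p : ℕ} [hp : Fact p.Prime] (hp5 : 5 ≤ p) {m : ℕ}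
    (hm : 3*m+1 = p ∨ 3*m+1 = 2*p) :
    -2 * ∑ k ∈ Icc 1 m, (k:ZMod p)⁻¹ = ((3 * ((3^(p-1) - 1) / p) : ℕ) : ZMod p) := by
  have hpp := hp.out
  have hp3 : p % 3 ≠ 0 := by
    intro h
    have hdvd : (3:ℕ) ∣ p := Nat.dvd_of_mod_eq_zero h
    rcases (hpp.eq_one_or_self_of_dvd 3 hdvd) with h' | h' <;> omega
  set a := p/3 with ha
  set b := 2*p/3 with hb
  have hab : a ≤ b := by omega
  have hb1 : b ≤ p-1 := by omega
  have hpa : p - a = b + 1 := by omega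
  -- sums over Ioc
  have hIccIoc : ∀ n : ℕ, Icc 1 n = Ioc 0 n := fun n => by
    ext x; simp [Finset.mem_Icc, Finset.mem_Ioc]; omega
  set A := ∑ k ∈ Ioc 0 a, (k:ZMod p)⁻¹ with hA
  set B := ∑ k ∈ Ioc a b, (k:ZMod p)⁻¹ with hB
  set C := ∑ k ∈ Ioc b (p-1), (k:ZMod p)⁻¹ with hC
  have hsplit : A + B + C = ∑ k ∈ Icc 1 (p-1), (k:ZMod p)⁻¹ := by
    rw [hIccIoc, hA, hB, hC, Finset.sum_Ioc_consecutive _ (by omega : 0 ≤ a) hab,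
      Finset.sum_Ioc_consecutive _ (by omega : 0 ≤ b) hb1]
  have hH0 : ∑ k ∈ Icc 1 (p-1), (k:ZMod p)⁻¹ = 0 := by
    have h := aux_reflect (p := p) (p-1) (le_refl _)
    have e : p - (p-1) = 1 := by omega
    rw [e] at h
    have h2ne : (2 : ZMod p) ≠ 0 := by
      have : ((2:ℕ) : ZMod p) ≠ 0 := aux_cast_ne_zero (by norm_num) (by omega)
      push_cast at this; exact this
    apply mul_left_cancel₀ h2ne
    linear_combination h
  have hCA : C = -A := by
    have h := aux_reflect (p := p) a (by omega)
    rw [hpa] at h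
    rw [hC, ← Finset.Icc_add_one_left_eq_Ioc, hA, ← hIccIoc]
    exact h
  -- main sum value
  have hval : ∑ k ∈ Icc 1 (p-1), ((3*k/p : ℕ) : ZMod p) * (k:ZMod p)⁻¹ = B + 2*C := by
    rw [hIccIoc]
    rw [← Finset.sum_Ioc_consecutive _ (by omega : 0 ≤ b) hb1,
      ← Finset.sum_Ioc_consecutive _ (by omega : 0 ≤ a) hab]
    have e1 : ∑ k ∈ Ioc 0 a, ((3*k/p : ℕ) : ZMod p) * (k:ZMod p)⁻¹ = 0 := by
      apply Finset.sum_eq_zero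
      intro k hk
      simp only [Finset.mem_Ioc] at hk
      have : 3*k/p = 0 := Nat.div_eq_of_lt (by omega)
      rw [this]; simp
    have e2 : ∀ k ∈ Ioc a b, ((3*k/p : ℕ) : ZMod p) * (k:ZMod p)⁻¹ = (k:ZMod p)⁻¹ := by
      intro k hk
      simp only [Finset.mem_Ioc] at hk
      have : 3*k/p = 1 := Nat.div_eq_of_lt_le (by omega) (by omega)
      rw [this]; simp
    have e3 : ∀ k ∈ Ioc b (p-1), ((3*k/p : ℕ) : ZMod p) * (k:ZMod p)⁻¹ = 2 * (k:ZMod p)⁻¹ := by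
      intro k hk
      simp only [Finset.mem_Ioc] at hk
      have : 3*k/p = 2 := Nat.div_eq_of_lt_le (by omega) (by omega)
      rw [this]; push_cast; ring
    rw [e1, Finset.sum_congr rfl e2, Finset.sum_congr rfl e3, ← Finset.mul_sum]
    rw [← hB, ← hC]
    ring
  -- identify H_m
  have hHm : ∑ k ∈ Icc 1 m, (k:ZMod p)⁻¹ = A := by
    rcases hm with h | h
    · have : m = a := by omega
      rw [this, hIccIoc]
    · have hmb : m = b := by omega
      have hB0 : B = 0 := by
        have := hsplit
        rw [hH0] at this
        rw [hCA] at this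
        linear_combination this
      rw [hmb, hIccIoc, ← Finset.sum_Ioc_consecutive _ (by omega : 0 ≤ a) hab, ← hA, ← hB, hB0,
        add_zero]
  rw [aux_3q hp5, hval, hHm, hCA]
  have := hsplit
  rw [hH0, hCA] at this
  linear_combination -this

lemma aux_vdm (m k : ℕ) :
    ((m+k).choose k : ℕ) = ∑ i ∈ range (m+1), m.choose i * k.choose i := by
  have h := Nat.add_choose_eq m k k
  rw [Finset.Nat.sum_antidiagonal_eq_sum_range_succ_mk] at h
  have h2 : ∀ i ∈ range (k+1), m.choose i * k.choose (k-i) = m.choose i * k.choose i := by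
    intro i hi
    simp only [mem_range] at hi
    rw [Nat.choose_symm (by omega)]
  rw [Finset.sum_congr rfl h2] at h
  rw [h]
  rcases le_or_gt k m with hkm | hkm
  · apply Finset.sum_subset (by intro x hx; simp only [mem_range] at *; omega)
    intro x _ hx
    simp only [mem_range, not_lt] at hx
    rw [Nat.choose_eq_zero_of_lt (by omega : k < x), mul_zero]
  · symm
    apply Finset.sum_subset (by intro x hx; simp only [mem_range] at *; omega)
    intro x _ hx
    simp only [mem_range, not_lt] at hx
    rw [Nat.choose_eq_zero_of_lt (by omega : m < x), zero_mul]

theorem stmt_4 (p : ℕ) [Fact p.Prime] (hp5 : 5 ≤ p) :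
    ∑ k ∈ Finset.Icc 1 (p - 1),
      ((((3 * k).factorial / (k.factorial) ^ 3 : ℕ) : ZMod p)
        * ((27 : ZMod p)⁻¹) ^ k * ((k : ZMod p)⁻¹))
      = 3 * (((3 ^ (p - 1) - 1) / p : ℕ) : ZMod p) := by
  have hpp := (Fact.out : p.Prime)
  have hp3 : p % 3 ≠ 0 := by
    intro h
    have hdvd : (3:ℕ) ∣ p := Nat.dvd_of_mod_eq_zero h
    rcases (hpp.eq_one_or_self_of_dvd 3 hdvd) with h' | h' <;> omega
  obtain ⟨m, hm⟩ : ∃ m, 3*m+1 = p ∨ 3*m+1 = 2*p := by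
    refine ⟨if p % 3 = 1 then p/3 else (2*p-1)/3, ?_⟩
    split <;> [left; right] <;> omega
  have hm1 : 1 ≤ m := by omega
  have hmp : m ≤ p - 1 := by omega
  have h3ne : (3 : ZMod p) ≠ 0 := by
    have : ((3:ℕ) : ZMod p) ≠ 0 := aux_cast_ne_zero (by norm_num) (by omega)
    push_cast at this; exact this
  have h27ne : (27 : ZMod p) ≠ 0 := by
    have e : (27 : ZMod p) = (3:ZMod p)^3 := by norm_num
    rw [e]; exact pow_ne_zero _ h3ne
  -- Step A : rewrite summand
  have stepA : ∀ k ∈ Icc 1 (p-1),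
      ((((3 * k).factorial / (k.factorial) ^ 3 : ℕ) : ZMod p)
        * ((27 : ZMod p)⁻¹) ^ k * ((k : ZMod p)⁻¹))
      = (-1)^k * (m.choose k : ZMod p) * (k:ZMod p)⁻¹
          * ∑ i ∈ range (m+1), (m.choose i : ZMod p) * (k.choose i : ZMod p) := by
    intro k hk
    simp only [mem_Icc] at hk
    rw [aux_factdiv k, aux_lemma1 hm k (by omega)]
    have hcan : (27:ZMod p)^k * ((27 : ZMod p)⁻¹)^k = 1 := by
      rw [← mul_pow, mul_inv_cancel₀ h27ne, one_pow]
    have hv : ((m+k).choose k : ZMod p)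
        = ∑ i ∈ range (m+1), (m.choose i : ZMod p) * (k.choose i : ZMod p) := by
      have := congrArg (Nat.cast : ℕ → ZMod p) (aux_vdm m k)
      push_cast at this
      exact this
    rw [← hv]
    linear_combination ((-1:ZMod p)^k * (m.choose k : ZMod p) * ((m+k).choose k : ZMod p)
      * (k:ZMod p)⁻¹) * hcan
  rw [Finset.sum_congr rfl stepA]
  -- Step B : push sum inside and swap
  have stepB : ∑ k ∈ Icc 1 (p-1), ((-1)^k * (m.choose k : ZMod p) * (k:ZMod p)⁻¹
        * ∑ i ∈ range (m+1), (m.choose i : ZMod p) * (k.choose i : ZMod p))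
      = ∑ i ∈ range (m+1), ∑ k ∈ Icc 1 (p-1),
          (m.choose i : ZMod p) * ((-1)^k * (m.choose k : ZMod p) * (k:ZMod p)⁻¹
            * (k.choose i : ZMod p)) := by
    rw [Finset.sum_comm]
    apply Finset.sum_congr rfl
    intro k _
    rw [Finset.mul_sum]
    apply Finset.sum_congr rfl
    intro i _
    ring
  rw [stepB]
  -- split off i = 0
  have hins : range (m+1) = insert 0 (Icc 1 m) := by
    ext x; simp [Finset.mem_range, Finset.mem_Icc]; omega
  rw [hins, Finset.sum_insert (by simp)]
  -- inner sum at i = 0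
  have hshrink : ∀ (g : ℕ → ZMod p), (∀ k, 1 ≤ k → k ≤ p-1 → m < k → g k = 0) →
      ∑ k ∈ Icc 1 (p-1), g k = ∑ k ∈ Icc 1 m, g k := by
    intro g hg
    symm
    apply Finset.sum_subset (by intro x hx; simp only [mem_Icc] at *; omega)
    intro x hx hx2
    simp only [mem_Icc] at hx hx2
    exact hg x (by omega) (by omega) (by omega)
  have hIIIa := aux_IIIa (p := p) m (by omega)
  have inner0 : ∑ k ∈ Icc 1 (p-1),
      (m.choose 0 : ZMod p) * ((-1)^k * (m.choose k : ZMod p) * (k:ZMod p)⁻¹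
        * (k.choose 0 : ZMod p))
      = - ∑ k ∈ Icc 1 m, (k:ZMod p)⁻¹ := by
    have e : ∀ k ∈ Icc 1 (p-1), (m.choose 0 : ZMod p) * ((-1)^k * (m.choose k : ZMod p)
        * (k:ZMod p)⁻¹ * (k.choose 0 : ZMod p))
        = (-1)^k * (m.choose k : ZMod p) * (k:ZMod p)⁻¹ := by
      intro k _
      simp [Nat.choose_zero_right]
    rw [Finset.sum_congr rfl e, hshrink _ ?_, hIIIa]
    intro k _ _ hmk
    rw [Nat.choose_eq_zero_of_lt hmk]
    simp
  rw [inner0]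
  -- inner sums for i ≥ 1
  have inner : ∀ i ∈ Icc 1 m, ∑ k ∈ Icc 1 (p-1),
      (m.choose i : ZMod p) * ((-1)^k * (m.choose k : ZMod p) * (k:ZMod p)⁻¹
        * (k.choose i : ZMod p))
      = (-1)^i * (m.choose i : ZMod p) * (i:ZMod p)⁻¹ := by
    intro i hi
    simp only [mem_Icc] at hi
    have hine : (i : ZMod p) ≠ 0 := aux_cast_ne_zero (by omega) (by omega)
    have e : ∀ k ∈ Icc 1 (p-1), (m.choose i : ZMod p) * ((-1)^k * (m.choose k : ZMod p)
        * (k:ZMod p)⁻¹ * (k.choose i : ZMod p))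
        = ((m.choose i : ZMod p) * (i:ZMod p)⁻¹)
            * ((-1)^k * (m.choose k : ZMod p) * ((k-1).choose (i-1) : ZMod p)) := by
      intro k hk
      simp only [mem_Icc] at hk
      have hkne : (k : ZMod p) ≠ 0 := aux_cast_ne_zero (by omega) (by omega)
      -- i * C(k,i) = k * C(k-1,i-1)
      have hnat : k * ((k-1).choose (i-1)) = (k.choose i) * i := by
        have h := Nat.add_one_mul_choose_eq (k-1) (i-1)
        have e1 : k - 1 + 1 = k := by omega
        have e2 : i - 1 + 1 = i := by omega
        rw [e1, e2] at h
        exact h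
      have hK : (k:ZMod p) * (((k-1).choose (i-1) : ℕ) : ZMod p)
          = ((k.choose i : ℕ) : ZMod p) * (i:ZMod p) := by exact_mod_cast congrArg (Nat.cast : ℕ → ZMod p) hnat
      have hki : (k:ZMod p)⁻¹ * (k:ZMod p) = 1 := inv_mul_cancel₀ hkne
      have hii : (i:ZMod p)⁻¹ * (i:ZMod p) = 1 := inv_mul_cancel₀ hine
      -- goal : ... = ...
      linear_combination (-(-1:ZMod p)^k * (m.choose i : ZMod p) * (m.choose k : ZMod p)
          * (i:ZMod p)⁻¹ * (k:ZMod p)⁻¹) * hK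
        + ((-1:ZMod p)^k * (m.choose i : ZMod p) * (m.choose k : ZMod p)
          * (i:ZMod p)⁻¹ * (((k-1).choose (i-1) : ℕ) : ZMod p)) * hki
        + (-(-1:ZMod p)^k * (m.choose i : ZMod p) * (m.choose k : ZMod p)
          * (k:ZMod p)⁻¹ * ((k.choose i : ℕ) : ZMod p)) * hii
    rw [Finset.sum_congr rfl e, ← Finset.mul_sum]
    have hsub : ∑ k ∈ Icc 1 (p-1), ((-1:ZMod p)^k * (m.choose k : ZMod p)
          * (((k-1).choose (i-1) : ℕ) : ZMod p))
        = ∑ k ∈ Icc i m, ((-1:ZMod p)^k * (m.choose k : ZMod p)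
          * (((k-1).choose (i-1) : ℕ) : ZMod p)) := by
      symm
      apply Finset.sum_subset (by intro x hx; simp only [mem_Icc] at *; omega)
      intro x hx hx2
      simp only [mem_Icc] at hx hx2
      rcases le_or_gt x m with hxm | hxm
      · have hxi : x < i := by omega
        rw [Nat.choose_eq_zero_of_lt (by omega : x - 1 < i - 1)]
        simp
      · rw [Nat.choose_eq_zero_of_lt hxm]
        simp
    have hV : ∑ k ∈ Icc i m, ((-1:ZMod p)^k * (m.choose k : ZMod p)
          * (((k-1).choose (i-1) : ℕ) : ZMod p)) = (-1)^i := by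
      have := congrArg (Int.cast : ℤ → ZMod p) (aux_V i (by omega) m (by omega))
      push_cast at this
      exact this
    rw [hsub, hV]
    ring
  rw [Finset.sum_congr rfl inner]
  have hfin : ∑ i ∈ Icc 1 m, (-1:ZMod p)^i * (m.choose i : ZMod p) * (i:ZMod p)⁻¹
      = - ∑ k ∈ Icc 1 m, (k:ZMod p)⁻¹ := hIIIa
  rw [hfin]
  have hHm := aux_Hm hp5 hm
  push_cast at hHm
  rw [← hHm]
  ring
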